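/- Let Δ ≤ S₁₁ be the maximal twelve tone group of signature (4,2,1,4), i.e., the subgroup of permutations of {1,...,11} preserving each of the blocks {1,2,3,4}, {5,6}, {7}, {8,9,10,11}. The unique maximal Δ-orbit of T₇ is the set of scales {0} ∪ A ∪ B ∪ {7} ∪ C where A is a 2-element subset of {1,2,3,4}, B a 1-element subset of {5,6}, and C a 2-element subset of {8,9,10,11}; this orbit has exactly 72 elements. -/
import Mathlib


/-- The maximal twelve tone group Δ of signature (4,2,1,4): permutations of ℤ₁₂ fixing 0
and preserving each of the blocks {1,2,3,4}, {5,6}, {7}, {8,9,10,11}. -/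
def Delta : Set (Equiv.Perm (ZMod 12)) :=
  {σ | σ 0 = 0 ∧ σ 7 = 7 ∧
    ({1, 2, 3, 4} : Finset (ZMod 12)).image ⇑σ = {1, 2, 3, 4} ∧
    ({5, 6} : Finset (ZMod 12)).image ⇑σ = {5, 6} ∧
    ({8, 9, 10, 11} : Finset (ZMod 12)).image ⇑σ = {8, 9, 10, 11}}

/-- The Δ-orbit of a scale. -/
def deltaOrbit (s : Finset (ZMod 12)) : Set (Finset (ZMod 12)) :=
  {t | ∃ σ ∈ Delta, t = s.image ⇑σ}

/-- The mēḷakarta scales {0} ∪ A ∪ B ∪ {7} ∪ C with A a 2-subset of {1,2,3,4},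
B a 1-subset of {5,6}, C a 2-subset of {8,9,10,11}. -/
def melakarta : Set (Finset (ZMod 12)) :=
  {s | ∃ A B C : Finset (ZMod 12),
    A ⊆ {1, 2, 3, 4} ∧ A.card = 2 ∧ B ⊆ {5, 6} ∧ B.card = 1 ∧
    C ⊆ {8, 9, 10, 11} ∧ C.card = 2 ∧
    s = {(0 : ZMod 12)} ∪ A ∪ B ∪ {7} ∪ C}

set_option maxRecDepth 100000

namespace DeltaAux

def Bl0 : Finset (ZMod 12) := {0}
def Bl1 : Finset (ZMod 12) := {1,2,3,4}
def Bl2 : Finset (ZMod 12) := {5,6}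
def Bl7 : Finset (ZMod 12) := {7}
def Bl3 : Finset (ZMod 12) := {8,9,10,11}

def PCF (e a b c d : ℕ) : Finset (Finset (ZMod 12)) :=
  ((Finset.powersetCard e Bl0 ×ˢ Finset.powersetCard a Bl1 ×ˢ Finset.powersetCard b Bl2 ×ˢ
    Finset.powersetCard c Bl7 ×ˢ Finset.powersetCard d Bl3).image
    fun x => x.1 ∪ x.2.1 ∪ x.2.2.1 ∪ x.2.2.2.1 ∪ x.2.2.2.2)

lemma blocks_union : Bl0 ∪ Bl1 ∪ Bl2 ∪ Bl7 ∪ Bl3 = (Finset.univ : Finset (ZMod 12)) := by decide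

lemma decomp (t : Finset (ZMod 12)) :
    t = (t ∩ Bl0) ∪ (t ∩ Bl1) ∪ (t ∩ Bl2) ∪ (t ∩ Bl7) ∪ (t ∩ Bl3) := by
  conv_lhs => rw [← Finset.inter_univ t, ← blocks_union]
  simp [Finset.inter_union_distrib_left]

lemma mem_PCF (t : Finset (ZMod 12)) :
    t ∈ PCF (t ∩ Bl0).card (t ∩ Bl1).card (t ∩ Bl2).card (t ∩ Bl7).card (t ∩ Bl3).card := by
  refine Finset.mem_image.2 ⟨⟨t ∩ Bl0, t ∩ Bl1, t ∩ Bl2, t ∩ Bl7, t ∩ Bl3⟩, ?_, (decomp t).symm⟩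
  refine Finset.mem_product.2 ⟨?_, Finset.mem_product.2 ⟨?_, Finset.mem_product.2
    ⟨?_, Finset.mem_product.2 ⟨?_, ?_⟩⟩⟩⟩ <;>
    exact Finset.mem_powersetCard.2 ⟨Finset.inter_subset_right, rfl⟩

lemma card_inter_image {σ : Equiv.Perm (ZMod 12)} {B : Finset (ZMod 12)}
    (hB : B.image ⇑σ = B) (s : Finset (ZMod 12)) :
    ((s.image ⇑σ) ∩ B).card = (s ∩ B).card := by
  conv_lhs => rw [← hB, ← Finset.image_inter _ _ σ.injective]
  exact Finset.card_image_of_injective _ σ.injective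

lemma image_of_fixed {σ : Equiv.Perm (ZMod 12)} {u : Finset (ZMod 12)}
    (h : ∀ x ∈ u, σ x = x) : u.image ⇑σ = u := by
  rw [Finset.image_congr (g := id) (fun x hx => h x hx), Finset.image_id]

lemma bl0_image {σ : Equiv.Perm (ZMod 12)} (h : σ ∈ Delta) : Bl0.image ⇑σ = Bl0 := by
  simp only [Bl0, Finset.image_singleton, h.1]

lemma bl7_image {σ : Equiv.Perm (ZMod 12)} (h : σ ∈ Delta) : Bl7.image ⇑σ = Bl7 := by
  simp only [Bl7, Finset.image_singleton, h.2.1]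

lemma bl1_image {σ : Equiv.Perm (ZMod 12)} (h : σ ∈ Delta) : Bl1.image ⇑σ = Bl1 := h.2.2.1

lemma bl2_image {σ : Equiv.Perm (ZMod 12)} (h : σ ∈ Delta) : Bl2.image ⇑σ = Bl2 := h.2.2.2.1

lemma bl3_image {σ : Equiv.Perm (ZMod 12)} (h : σ ∈ Delta) : Bl3.image ⇑σ = Bl3 := h.2.2.2.2

lemma delta_trans {σ τ : Equiv.Perm (ZMod 12)} (hσ : σ ∈ Delta) (hτ : τ ∈ Delta) :
    σ.trans τ ∈ Delta := by
  obtain ⟨h0, h7, h1, h2, h3⟩ := hσ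
  obtain ⟨g0, g7, g1, g2, g3⟩ := hτ
  refine ⟨by simp [h0, g0], by simp [h7, g7], ?_, ?_, ?_⟩ <;>
    rw [Equiv.coe_trans, ← Finset.image_image] <;> simp [h1, h2, h3, g1, g2, g3]

lemma delta_symm {σ : Equiv.Perm (ZMod 12)} (hσ : σ ∈ Delta) : σ.symm ∈ Delta := by
  obtain ⟨h0, h7, h1, h2, h3⟩ := hσ
  have key : ∀ u : Finset (ZMod 12), u.image ⇑σ = u → u.image ⇑σ.symm = u := by
    intro u hu
    calc u.image ⇑σ.symm = (u.image ⇑σ).image ⇑σ.symm := by rw [hu]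
      _ = u.image (⇑σ.symm ∘ ⇑σ) := Finset.image_image
      _ = u.image id := by rw [Equiv.symm_comp_self]
      _ = u := Finset.image_id
  exact ⟨(Equiv.symm_apply_eq σ).2 h0.symm, (Equiv.symm_apply_eq σ).2 h7.symm,
    key _ h1, key _ h2, key _ h3⟩

lemma orbit_subset (s : Finset (ZMod 12)) :
    deltaOrbit s ⊆ ↑(PCF (s ∩ Bl0).card (s ∩ Bl1).card (s ∩ Bl2).card (s ∩ Bl7).card
      (s ∩ Bl3).card) := by
  rintro t ⟨σ, hσ, rfl⟩
  have h := mem_PCF (s.image ⇑σ)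
  rw [card_inter_image (bl0_image hσ), card_inter_image (bl1_image hσ),
    card_inter_image (bl2_image hσ), card_inter_image (bl7_image hσ),
    card_inter_image (bl3_image hσ)] at h
  exact Finset.mem_coe.2 h

/-- canonical scale -/
def s0 : Finset (ZMod 12) := {0,1,2,5,7,8,9}

lemma pc1 : Finset.powersetCard 2 Bl1 =
    ({{1,2},{1,3},{1,4},{2,3},{2,4},{3,4}} : Finset (Finset (ZMod 12))) := by decide

lemma pc2 : Finset.powersetCard 1 Bl2 = ({{5},{6}} : Finset (Finset (ZMod 12))) := by decide

lemma pc3 : Finset.powersetCard 2 Bl3 =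
    ({{8,9},{8,10},{8,11},{9,10},{9,11},{10,11}} : Finset (Finset (ZMod 12))) := by decide

abbrev Good1 (σ : Equiv.Perm (ZMod 12)) (A : Finset (ZMod 12)) : Prop :=
  (∀ x : ZMod 12, x ∉ Bl1 → σ x = x) ∧ Bl1.image ⇑σ = Bl1 ∧
    ({1,2} : Finset (ZMod 12)).image ⇑σ = A

abbrev Good2 (σ : Equiv.Perm (ZMod 12)) (B : Finset (ZMod 12)) : Prop :=
  (∀ x : ZMod 12, x ∉ Bl2 → σ x = x) ∧ Bl2.image ⇑σ = Bl2 ∧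
    ({5} : Finset (ZMod 12)).image ⇑σ = B

abbrev Good3 (σ : Equiv.Perm (ZMod 12)) (C : Finset (ZMod 12)) : Prop :=
  (∀ x : ZMod 12, x ∉ Bl3 → σ x = x) ∧ Bl3.image ⇑σ = Bl3 ∧
    ({8,9} : Finset (ZMod 12)).image ⇑σ = C

lemma exists_good1 {A : Finset (ZMod 12)} (hA : A ∈ Finset.powersetCard 2 Bl1) :
    ∃ σ : Equiv.Perm (ZMod 12), Good1 σ A := by
  rw [pc1] at hA
  fin_cases hA
  · exact ⟨1, by decide⟩
  · exact ⟨Equiv.swap 2 3, by decide⟩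
  · exact ⟨Equiv.swap 2 4, by decide⟩
  · exact ⟨Equiv.swap 1 3, by decide⟩
  · exact ⟨Equiv.swap 1 4, by decide⟩
  · exact ⟨(Equiv.swap 1 3).trans (Equiv.swap 2 4), by decide⟩

lemma exists_good2 {B : Finset (ZMod 12)} (hB : B ∈ Finset.powersetCard 1 Bl2) :
    ∃ σ : Equiv.Perm (ZMod 12), Good2 σ B := by
  rw [pc2] at hB
  fin_cases hB
  · exact ⟨1, by decide⟩
  · exact ⟨Equiv.swap 5 6, by decide⟩

lemma exists_good3 {C : Finset (ZMod 12)} (hC : C ∈ Finset.powersetCard 2 Bl3) :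
    ∃ σ : Equiv.Perm (ZMod 12), Good3 σ C := by
  rw [pc3] at hC
  fin_cases hC
  · exact ⟨1, by decide⟩
  · exact ⟨Equiv.swap 9 10, by decide⟩
  · exact ⟨Equiv.swap 9 11, by decide⟩
  · exact ⟨Equiv.swap 8 10, by decide⟩
  · exact ⟨Equiv.swap 8 11, by decide⟩
  · exact ⟨(Equiv.swap 8 10).trans (Equiv.swap 9 11), by decide⟩

lemma good_delta1 {σ : Equiv.Perm (ZMod 12)} {A} (h : Good1 σ A) : σ ∈ Delta := by
  obtain ⟨hs, hB, -⟩ := h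
  refine ⟨hs 0 (by decide), hs 7 (by decide), hB, ?_, ?_⟩ <;>
    exact image_of_fixed (fun x hx => hs x (by revert hx; revert x; decide))

lemma good_delta2 {σ : Equiv.Perm (ZMod 12)} {B} (h : Good2 σ B) : σ ∈ Delta := by
  obtain ⟨hs, hB, -⟩ := h
  refine ⟨hs 0 (by decide), hs 7 (by decide), ?_, hB, ?_⟩ <;>
    exact image_of_fixed (fun x hx => hs x (by revert hx; revert x; decide))

lemma good_delta3 {σ : Equiv.Perm (ZMod 12)} {C} (h : Good3 σ C) : σ ∈ Delta := by
  obtain ⟨hs, hB, -⟩ := h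
  refine ⟨hs 0 (by decide), hs 7 (by decide), ?_, ?_, hB⟩ <;>
    exact image_of_fixed (fun x hx => hs x (by revert hx; revert x; decide))

lemma eq_bl0 {E : Finset (ZMod 12)} (h : E ∈ Finset.powersetCard 1 Bl0) : E = Bl0 := by
  rw [Finset.mem_powersetCard] at h
  exact Finset.eq_of_subset_of_card_le h.1 (by rw [h.2]; decide)

lemma eq_bl7 {E : Finset (ZMod 12)} (h : E ∈ Finset.powersetCard 1 Bl7) : E = Bl7 := by
  rw [Finset.mem_powersetCard] at h
  exact Finset.eq_of_subset_of_card_le h.1 (by rw [h.2]; decide)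

lemma bl1_not_bl2 : ∀ x : ZMod 12, x ∈ Bl1 → x ∉ Bl2 := by decide
lemma bl1_not_bl3 : ∀ x : ZMod 12, x ∈ Bl1 → x ∉ Bl3 := by decide
lemma bl2_not_bl3 : ∀ x : ZMod 12, x ∈ Bl2 → x ∉ Bl3 := by decide

lemma image_singleton_fixed {σ : Equiv.Perm (ZMod 12)} {y : ZMod 12} (h : σ y = y) :
    ({y} : Finset (ZMod 12)).image ⇑σ = {y} := by
  rw [Finset.image_singleton, h]

lemma image_pair_fixed {σ : Equiv.Perm (ZMod 12)} {x y : ZMod 12} (hx : σ x = x)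
    (hy : σ y = y) : ({x, y} : Finset (ZMod 12)).image ⇑σ = {x, y} := by
  rw [show ({x, y} : Finset (ZMod 12)) = insert x {y} from rfl, Finset.image_insert,
    Finset.image_singleton, hx, hy]

lemma reach {t : Finset (ZMod 12)} (ht : t ∈ PCF 1 2 1 1 2) :
    ∃ σ ∈ Delta, t = s0.image ⇑σ := by
  obtain ⟨⟨E, A, B, S7, C⟩, hmem, rfl⟩ := Finset.mem_image.1 ht
  dsimp only
  simp only [Finset.mem_product] at hmem
  obtain ⟨hE, hA, hB, hS7, hC⟩ := hmem
  obtain ⟨σ1, hg1⟩ := exists_good1 hA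
  obtain ⟨σ2, hg2⟩ := exists_good2 hB
  obtain ⟨σ3, hg3⟩ := exists_good3 hC
  have hAsub : A ⊆ Bl1 := (Finset.mem_powersetCard.1 hA).1
  have hBsub : B ⊆ Bl2 := (Finset.mem_powersetCard.1 hB).1
  have hCsub : C ⊆ Bl3 := (Finset.mem_powersetCard.1 hC).1
  have hσ1_0 : σ1 0 = 0 := hg1.1 0 (by decide)
  have hσ2_0 : σ2 0 = 0 := hg2.1 0 (by decide)
  have hσ3_0 : σ3 0 = 0 := hg3.1 0 (by decide)
  have hσ1_7 : σ1 7 = 7 := hg1.1 7 (by decide)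
  have hσ2_7 : σ2 7 = 7 := hg2.1 7 (by decide)
  have hσ3_7 : σ3 7 = 7 := hg3.1 7 (by decide)
  have hσ1_5 : σ1 5 = 5 := hg1.1 5 (by decide)
  have hσ1_8 : σ1 8 = 8 := hg1.1 8 (by decide)
  have hσ1_9 : σ1 9 = 9 := hg1.1 9 (by decide)
  have hσ2_8 : σ2 8 = 8 := hg2.1 8 (by decide)
  have hσ2_9 : σ2 9 = 9 := hg2.1 9 (by decide)
  refine ⟨(σ1.trans σ2).trans σ3,
    delta_trans (delta_trans (good_delta1 hg1) (good_delta2 hg2)) (good_delta3 hg3), ?_⟩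
  have h3img : ∀ u : Finset (ZMod 12),
      u.image ⇑((σ1.trans σ2).trans σ3) = ((u.image ⇑σ1).image ⇑σ2).image ⇑σ3 := by
    intro u
    rw [Finset.image_image, Finset.image_image]
    rfl
  have hs0eq : s0 = ({0} : Finset (ZMod 12)) ∪ {1, 2} ∪ {5} ∪ {7} ∪ {8, 9} := by decide
  have p0 : ((({0} : Finset (ZMod 12)).image ⇑σ1).image ⇑σ2).image ⇑σ3 = {0} := by
    rw [image_singleton_fixed hσ1_0, image_singleton_fixed hσ2_0, image_singleton_fixed hσ3_0]
  have p7 : ((({7} : Finset (ZMod 12)).image ⇑σ1).image ⇑σ2).image ⇑σ3 = {7} := by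
    rw [image_singleton_fixed hσ1_7, image_singleton_fixed hσ2_7, image_singleton_fixed hσ3_7]
  have pA : ((({1, 2} : Finset (ZMod 12)).image ⇑σ1).image ⇑σ2).image ⇑σ3 = A := by
    rw [hg1.2.2, image_of_fixed (fun x hx => hg2.1 x (bl1_not_bl2 x (hAsub hx))),
      image_of_fixed (fun x hx => hg3.1 x (bl1_not_bl3 x (hAsub hx)))]
  have pB : ((({5} : Finset (ZMod 12)).image ⇑σ1).image ⇑σ2).image ⇑σ3 = B := by
    rw [image_singleton_fixed hσ1_5, hg2.2.2,
      image_of_fixed (fun x hx => hg3.1 x (bl2_not_bl3 x (hBsub hx)))]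
  have pC : ((({8, 9} : Finset (ZMod 12)).image ⇑σ1).image ⇑σ2).image ⇑σ3 = C := by
    rw [image_pair_fixed hσ1_8 hσ1_9, image_pair_fixed hσ2_8 hσ2_9, hg3.2.2]
  rw [hs0eq, Finset.image_union, Finset.image_union, Finset.image_union, Finset.image_union,
    h3img, h3img, h3img, h3img, h3img, p0, p7, pA, pB, pC, eq_bl0 hE, eq_bl7 hS7]
  rfl

lemma orbit_eq {s : Finset (ZMod 12)} (h0 : (s ∩ Bl0).card = 1) (h1 : (s ∩ Bl1).card = 2)
    (h2 : (s ∩ Bl2).card = 1) (h7 : (s ∩ Bl7).card = 1) (h3 : (s ∩ Bl3).card = 2) :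
    deltaOrbit s = ↑(PCF 1 2 1 1 2) := by
  apply subset_antisymm
  · have h := orbit_subset s
    rwa [h0, h1, h2, h7, h3] at h
  · intro t ht
    have hs : s ∈ PCF 1 2 1 1 2 := by
      have h := mem_PCF s
      rwa [h0, h1, h2, h7, h3] at h
    obtain ⟨σ1, hσ1, hs1⟩ := reach hs
    obtain ⟨σ2, hσ2, ht2⟩ := reach ht
    refine ⟨σ1.symm.trans σ2, delta_trans (delta_symm hσ1) hσ2, ?_⟩
    rw [ht2, hs1, Finset.image_image]
    congr 1
    ext x
    simp

lemma melakarta_eq : melakarta = ↑(PCF 1 2 1 1 2) := by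
  ext t
  constructor
  · rintro ⟨A, B, C, hA, hAc, hB, hBc, hC, hCc, rfl⟩
    refine Finset.mem_coe.2 (Finset.mem_image.2 ⟨⟨{0}, A, B, {7}, C⟩, ?_, rfl⟩)
    simp only [Finset.mem_product, Finset.mem_powersetCard]
    exact ⟨⟨by decide, by decide⟩, ⟨hA, hAc⟩, ⟨hB, hBc⟩, ⟨by decide, by decide⟩, hC, hCc⟩
  · intro ht
    obtain ⟨⟨E, A, B, S7, C⟩, hmem, rfl⟩ := Finset.mem_image.1 (Finset.mem_coe.1 ht)
    dsimp only
    simp only [Finset.mem_product, Finset.mem_powersetCard] at hmem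
    obtain ⟨⟨hE, hEc⟩, ⟨hA, hAc⟩, ⟨hB, hBc⟩, ⟨hS7, hS7c⟩, hC, hCc⟩ := hmem
    have hE' : E = {0} := Finset.eq_of_subset_of_card_le hE (by rw [hEc]; decide)
    have hS7' : S7 = {7} := Finset.eq_of_subset_of_card_le hS7 (by rw [hS7c]; decide)
    exact ⟨A, B, C, hA, hAc, hB, hBc, hC, hCc, by rw [hE', hS7']⟩

lemma pcf_card : (PCF 1 2 1 1 2).card = 72 := by decide

lemma nat_card_coe (F : Finset (Finset (ZMod 12))) : Nat.card (↑F : Set (Finset (ZMod 12))) = F.card := by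
  rw [Nat.card_coe_set_eq, Set.ncard_coe_finset]

lemma card_decomp (t : Finset (ZMod 12)) :
    t.card = (t ∩ Bl0).card + (t ∩ Bl1).card + (t ∩ Bl2).card + (t ∩ Bl7).card +
      (t ∩ Bl3).card := by
  have key : ∀ u v : Finset (ZMod 12), Disjoint u v → Disjoint (t ∩ u) (t ∩ v) :=
    fun u v h => h.mono Finset.inter_subset_right Finset.inter_subset_right
  conv_lhs => rw [decomp t]
  rw [Finset.card_union_of_disjoint, Finset.card_union_of_disjoint,
    Finset.card_union_of_disjoint, Finset.card_union_of_disjoint]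
  · exact key _ _ (by decide)
  · exact Finset.disjoint_union_left.2 ⟨key _ _ (by decide), key _ _ (by decide)⟩
  · exact Finset.disjoint_union_left.2 ⟨Finset.disjoint_union_left.2
      ⟨key _ _ (by decide), key _ _ (by decide)⟩, key _ _ (by decide)⟩
  · exact Finset.disjoint_union_left.2 ⟨Finset.disjoint_union_left.2
      ⟨Finset.disjoint_union_left.2 ⟨key _ _ (by decide), key _ _ (by decide)⟩,
        key _ _ (by decide)⟩, key _ _ (by decide)⟩

lemma pcf_card_le (e a b c d : ℕ) :
    (PCF e a b c d).card ≤
      Nat.choose 1 e * (Nat.choose 4 a * (Nat.choose 2 b * (Nat.choose 1 c * Nat.choose 4 d))) := by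
  refine le_trans Finset.card_image_le ?_
  rw [Finset.card_product, Finset.card_product, Finset.card_product, Finset.card_product]
  simp only [Finset.card_powersetCard]
  rw [show Bl0.card = 1 by decide, show Bl1.card = 4 by decide, show Bl2.card = 2 by decide,
    show Bl7.card = 1 by decide, show Bl3.card = 4 by decide]

end DeltaAux

open DeltaAux in
/-- Any maximal Δ-orbit of T₇ is the set of the 72 mēḷakarta scales. -/
theorem delta_maximal_orbit_eq_melakarta :
    (∀ s : Finset (ZMod 12), 0 ∈ s → s.card = 7 →
      (∀ t : Finset (ZMod 12), 0 ∈ t → t.card = 7 →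
        Nat.card (deltaOrbit t) ≤ Nat.card (deltaOrbit s)) →
      deltaOrbit s = melakarta) ∧
    Nat.card melakarta = 72 := by
  constructor
  · intro s h0s hcard hmax
    have hs0orb : deltaOrbit s0 = ↑(PCF 1 2 1 1 2) :=
      orbit_eq (by decide) (by decide) (by decide) (by decide) (by decide)
    have hs0card : Nat.card (deltaOrbit s0) = 72 := by
      rw [hs0orb, nat_card_coe, pcf_card]
    have h72 : 72 ≤ Nat.card (deltaOrbit s) := by
      rw [← hs0card]; exact hmax s0 (by decide) (by decide)
    have hub : Nat.card (deltaOrbit s) ≤ (PCF (s ∩ Bl0).card (s ∩ Bl1).card (s ∩ Bl2).card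
        (s ∩ Bl7).card (s ∩ Bl3).card).card := by
      rw [Nat.card_coe_set_eq, ← Set.ncard_coe_finset]
      exact Set.ncard_le_ncard (orbit_subset s) (Finset.finite_toSet _)
    have he : (s ∩ Bl0).card = 1 := by
      have h : s ∩ Bl0 = Bl0 := subset_antisymm Finset.inter_subset_right
        (Finset.singleton_subset_iff.2 (Finset.mem_inter.2 ⟨h0s, by decide⟩))
      rw [h]; rfl
    have hsum := card_decomp s
    rw [hcard, he] at hsum
    have ha4 : (s ∩ Bl1).card ≤ 4 :=
      le_trans (Finset.card_le_card Finset.inter_subset_right) (by decide)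
    have hb2 : (s ∩ Bl2).card ≤ 2 :=
      le_trans (Finset.card_le_card Finset.inter_subset_right) (by decide)
    have hc1 : (s ∩ Bl7).card ≤ 1 :=
      le_trans (Finset.card_le_card Finset.inter_subset_right) (by decide)
    have hd4 : (s ∩ Bl3).card ≤ 4 :=
      le_trans (Finset.card_le_card Finset.inter_subset_right) (by decide)
    have hle := le_trans h72 (le_trans hub (pcf_card_le _ _ _ _ _))
    rw [he] at hle
    set a := (s ∩ Bl1).card with hadef
    set b := (s ∩ Bl2).card with hbdef
    set c := (s ∩ Bl7).card with hcdef
    set d := (s ∩ Bl3).card with hddef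
    have harith : a = 2 ∧ b = 1 ∧ c = 1 ∧ d = 2 := by
      clear_value a b c d
      clear hadef hbdef hcdef hddef hub h72 hs0card hs0orb hmax hcard h0s
      interval_cases a <;> interval_cases b <;> interval_cases c <;> interval_cases d <;>
        first
          | exact ⟨rfl, rfl, rfl, rfl⟩
          | omega
          | exact absurd hle (by decide)
    obtain ⟨h1, h2, h7, h3⟩ := harith
    rw [orbit_eq he h1 h2 h7 h3, melakarta_eq]
  · rw [melakarta_eq, nat_card_coe, pcf_card]
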